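/- arXiv:2509.17474 — 5 statements merged into one kernel-verified Lean document; each statement's English description precedes it below -/
import Mathlib

section
/- Let U ≥ 2 be an integer, α = 1/U, and let χ̂*_α(h) denote the h-th Fourier coefficient of χ*_α (so χ̂*_α(0) = α and χ̂*_α(h) = sin(πhα)/(πh) for h ≠ 0). Then for every integer a, the sum over all k ∈ ℤ of |χ̂*_α(kU + a)|² equals 1/U². -/
open MeasureTheory Complex Set
open scoped Real

lemma measurable_liftIoc (g : ℝ → ℂ) (hg : Measurable g) :
    Measurable (AddCircle.liftIoc 1 0 g) := by
  haveI : Fact ((0:ℝ) < 1) := ⟨zero_lt_one⟩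
  have : AddCircle.liftIoc 1 0 g =
      (g ∘ (Subtype.val : Ioc (0:ℝ) (0+1) → ℝ)) ∘ (AddCircle.measurableEquivIoc 1 0) := rfl
  rw [this]
  exact (hg.comp measurable_subtype_coe).comp (AddCircle.measurableEquivIoc 1 0).measurable

lemma key (x : ℝ) (hx : ∀ n : ℤ, x ≠ (n:ℝ)) :
    ∑' n : ℤ, Real.sin (Real.pi * x) ^ 2 / (Real.pi * (x - n)) ^ 2 = 1 := by
  haveI : Fact ((0:ℝ) < 1) := ⟨zero_lt_one⟩
  set g : ℝ → ℂ := fun t => Complex.exp (2 * Real.pi * I * x * t) with hgdef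
  have hgm : Measurable g := by fun_prop
  have hgnorm : ∀ t : ℝ, ‖g t‖ = 1 := by
    intro t
    have h1 : (2 * (Real.pi:ℂ) * I * x * t) = ((2*Real.pi*x*t : ℝ):ℂ) * I := by push_cast; ring
    rw [hgdef]
    simp only [h1]
    exact Complex.norm_exp_ofReal_mul_I _
  set F : AddCircle 1 → ℂ := AddCircle.liftIoc 1 0 g with hFdef
  have hFm : Measurable F := measurable_liftIoc g hgm
  have hFnorm : ∀ z, ‖F z‖ = 1 := fun z => hgnorm _
  have hmem : MemLp F 2 AddCircle.haarAddCircle :=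
    MemLp.of_bound hFm.aestronglyMeasurable 1
      (Filter.Eventually.of_forall fun z => (hFnorm z).le)
  set f := hmem.toLp F with hf
  have hae : (⇑f : AddCircle (1:ℝ) → ℂ) =ᵐ[AddCircle.haarAddCircle] F := hmem.coeFn_toLp
  have hcoeff : ∀ n : ℤ, fourierCoeff (⇑f : AddCircle (1:ℝ) → ℂ) n = fourierCoeff F n := by
    intro n
    exact integral_congr_ae (hae.mono fun z hz => by simp only [hz])
  have hFcoeff : ∀ n : ℤ, fourierCoeff F n
      = (Complex.exp (2*Real.pi*I*x) - 1) / (2*Real.pi*I*(x - n)) := by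
    intro n
    have hc : (2*(Real.pi:ℂ)*I*(x - n)) ≠ 0 := by
      simp only [mul_ne_zero_iff]
      refine ⟨⟨⟨two_ne_zero, ?_⟩, I_ne_zero⟩, ?_⟩
      · exact_mod_cast Real.pi_ne_zero
      · rw [sub_ne_zero]
        exact_mod_cast fun h => hx n (by exact_mod_cast h)
    have hterm : ∀ t : ℝ, (fourier (-n) (t : AddCircle (1:ℝ))) • g t
        = Complex.exp ((2*Real.pi*I*((x:ℂ) - (n:ℂ))) * t) := by
      intro t
      rw [fourier_coe_apply, smul_eq_mul, hgdef, ← Complex.exp_add]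
      congr 1
      push_cast
      ring
    rw [hFdef, fourierCoeff_liftIoc_eq, fourierCoeffOn_eq_integral]
    rw [show (0:ℝ)+1-0 = 1 by norm_num]
    rw [show (0:ℝ)+1 = 1 by norm_num]
    simp only [one_div_one, one_smul]
    trans (∫ t in (0:ℝ)..1, Complex.exp ((2*Real.pi*I*((x:ℂ) - (n:ℂ))) * t))
    · exact intervalIntegral.integral_congr fun t _ => hterm t
    · rw [integral_exp_mul_complex hc]
      have h2 : Complex.exp (2*(Real.pi:ℂ)*I*((x:ℂ) - (n:ℂ)) * ((1:ℝ):ℂ))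
          = Complex.exp (2*(Real.pi:ℂ)*I*x) := by
        rw [show (2*(Real.pi:ℂ)*I*((x:ℂ) - (n:ℂ)) * ((1:ℝ):ℂ))
            = 2*(Real.pi:ℂ)*I*x + (-n:ℤ) * (2*Real.pi*I) by push_cast; ring,
          Complex.exp_add, Complex.exp_int_mul_two_pi_mul_I, mul_one]
      have h3 : Complex.exp (2*(Real.pi:ℂ)*I*((x:ℂ) - (n:ℂ)) * ((0:ℝ):ℂ)) = 1 := by
        norm_num
      rw [h2, h3]
  have hnorm : ∀ n : ℤ, ‖fourierCoeff F n‖^2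
      = Real.sin (Real.pi*x)^2 / (Real.pi*(x - n))^2 := by
    intro n
    rw [hFcoeff n, norm_div, div_pow]
    have hnum : ‖Complex.exp (2*(Real.pi:ℂ)*I*x) - 1‖^2 = 4 * Real.sin (Real.pi*x)^2 := by
      have e1 : Complex.exp (2*(Real.pi:ℂ)*I*x) - 1
          = ((Real.cos (2*Real.pi*x) - 1 : ℝ) : ℂ) + ((Real.sin (2*Real.pi*x) : ℝ) : ℂ) * I := by
        rw [show 2*(Real.pi:ℂ)*I*x = ((2*Real.pi*x : ℝ):ℂ) * I by push_cast; ring,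
          Complex.exp_mul_I]
        push_cast
        ring
      rw [e1, Complex.sq_norm, Complex.normSq_add_mul_I]
      have h1 : Real.cos (2*Real.pi*x) = 2 * Real.cos (Real.pi*x)^2 - 1 := by
        rw [show 2*Real.pi*x = 2*(Real.pi*x) by ring]; exact Real.cos_two_mul _
      have h2 := Real.sin_sq_add_cos_sq (Real.pi*x)
      have h3 := Real.sin_sq_add_cos_sq (2*Real.pi*x)
      nlinarith [h1, h2, h3]
    have hden : ‖(2*(Real.pi:ℂ)*I*((x:ℂ) - (n:ℂ)))‖^2 = 4 * (Real.pi*(x - n))^2 := by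
      have e2 : (2*(Real.pi:ℂ)*I*((x:ℂ) - (n:ℂ))) = ((2*Real.pi*(x - n) : ℝ) : ℂ) * I := by
        push_cast; ring
      rw [e2, norm_mul, Complex.norm_I, mul_one,
        Complex.norm_real, Real.norm_eq_abs, _root_.sq_abs]
      ring
    rw [hnum, hden]
    have hπ : Real.pi * (x - n) ≠ 0 :=
      mul_ne_zero Real.pi_ne_zero (sub_ne_zero.mpr (fun h => hx n h))
    field_simp
  have hpars := tsum_sq_fourierCoeff f
  have hrhs : (∫ t : AddCircle (1:ℝ), ‖(⇑f : AddCircle (1:ℝ) → ℂ) t‖^2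
      ∂AddCircle.haarAddCircle) = 1 := by
    rw [integral_congr_ae ((hae.mono fun z hz => by simp only [hz]) :
      (fun t => ‖(⇑f : AddCircle (1:ℝ) → ℂ) t‖^2) =ᵐ[AddCircle.haarAddCircle]
      (fun t => ‖F t‖^2))]
    simp only [hFnorm, one_pow]
    simp
  calc ∑' n : ℤ, Real.sin (Real.pi * x) ^ 2 / (Real.pi * (x - n)) ^ 2
      = ∑' n : ℤ, ‖fourierCoeff (⇑f : AddCircle (1:ℝ) → ℂ) n‖^2 :=
        tsum_congr fun n => by rw [hcoeff n, hnorm n]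
    _ = 1 := by rw [hpars, hrhs]



/-- The Fourier coefficients of the 1-periodic characteristic function of
`[-α/2, α/2)` modulo 1: `χ̂*_α(0) = α` and `χ̂*_α(h) = sin(πhα)/(πh)` for `h ≠ 0`. -/
noncomputable def chiStarHat (α : ℝ) (h : ℤ) : ℝ :=
  if h = 0 then α else Real.sin (Real.pi * h * α) / (Real.pi * h)

/-- For `U ≥ 2`, `α = 1/U` and any integer `a`,
`Σ_{k ∈ ℤ} |χ̂*_α(kU + a)|² = 1/U²`. -/
theorem chiStarHat_sq_sum_arith_prog (U : ℕ) (hU : 2 ≤ U) (a : ℤ) :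
    ∑' k : ℤ, (chiStarHat (1 / U) (k * U + a)) ^ 2 = 1 / (U : ℝ) ^ 2 := by
  have hU0 : (U:ℝ) ≠ 0 := Nat.cast_ne_zero.mpr (by omega)
  by_cases hdvd : (U:ℤ) ∣ a
  · obtain ⟨m, rfl⟩ := hdvd
    rw [tsum_eq_single (-m) ?_]
    · rw [show (-m) * (U:ℤ) + (U:ℤ)*m = 0 by ring]
      simp [chiStarHat, div_pow]
    · intro k hk
      have hne : k * (U:ℤ) + (U:ℤ)*m ≠ 0 := by
        intro h
        apply hk
        have h2 : (k + m) * (U:ℤ) = 0 := by linarith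
        rcases mul_eq_zero.mp h2 with h3 | h3
        · omega
        · omega
      simp only [chiStarHat, if_neg hne]
      have hs : Real.sin (Real.pi * ((k*(U:ℤ) + (U:ℤ)*m : ℤ):ℝ) * (1/(U:ℝ))) = 0 := by
        rw [show (Real.pi * ((k*(U:ℤ) + (U:ℤ)*m : ℤ):ℝ) * (1/(U:ℝ)))
            = ((k+m : ℤ):ℝ) * Real.pi by push_cast; field_simp]
        exact Real.sin_int_mul_pi _
      rw [hs]
      simp
  · set x : ℝ := (a:ℝ)/U with hxdef
    have hxne : ∀ n : ℤ, x ≠ (n:ℝ) := by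
      intro n h
      apply hdvd
      refine ⟨n, ?_⟩
      have : (a:ℝ) = (U:ℝ) * (n:ℝ) := by
        rw [hxdef] at h
        field_simp at h
        linarith
      exact_mod_cast this
    have hkey := key x hxne
    have hterm : ∀ k : ℤ, (chiStarHat (1 / U) (k * U + a)) ^ 2
        = (1/(U:ℝ)^2) * (Real.sin (Real.pi*x)^2 / (Real.pi*(x - (-k:ℤ)))^2) := by
      intro k
      have hne : k * (U:ℤ) + a ≠ 0 := by
        intro h
        exact hdvd ⟨-k, by linarith⟩
      simp only [chiStarHat, if_neg hne]
      have hsin : Real.sin (Real.pi * ((k*(U:ℤ) + a : ℤ):ℝ) * (1/(U:ℝ))) ^ 2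
          = Real.sin (Real.pi * x) ^ 2 := by
        have hcst : ((k*(U:ℤ)+a:ℤ):ℝ) = (k:ℝ)*(U:ℝ) + (a:ℝ) := by push_cast; ring
        rw [show Real.pi * ((k*(U:ℤ)+a:ℤ):ℝ) * (1/(U:ℝ)) = Real.pi * x + k * Real.pi by
          rw [hcst, hxdef]; field_simp; ring]
        rw [Real.sin_add_int_mul_pi, mul_pow]
        have h4 : ((-1:ℝ)^k)^2 = 1 := by
          rw [sq, ← zpow_add₀ (by norm_num : (-1:ℝ) ≠ 0), show k+k = 2*k by ring, zpow_mul]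
          norm_num
        rw [h4, one_mul]
      rw [div_pow, hsin]
      have hden : (Real.pi * ((k*(U:ℤ) + a : ℤ):ℝ))^2
          = (U:ℝ)^2 * (Real.pi*(x - (-k:ℤ)))^2 := by
        rw [show Real.pi*(x - ((-k:ℤ):ℝ)) = Real.pi * ((x + k)) by push_cast; ring]
        rw [show (((k*(U:ℤ)+a:ℤ)):ℝ) = (U:ℝ) * (x + k) by rw [hxdef]; push_cast; field_simp; ring]
        ring
      rw [hden]
      have hπne : (Real.pi*(x - (-k:ℤ)))^2 ≠ 0 := by
        have : x - ((-k:ℤ):ℝ) ≠ 0 := sub_ne_zero.mpr (hxne (-k))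
        positivity
      field_simp
    calc ∑' k : ℤ, (chiStarHat (1 / U) (k * U + a)) ^ 2
        = ∑' k : ℤ, (1/(U:ℝ)^2) * (Real.sin (Real.pi*x)^2 / (Real.pi*(x - (-k:ℤ)))^2) :=
          tsum_congr hterm
      _ = (1/(U:ℝ)^2) * ∑' k : ℤ, (Real.sin (Real.pi*x)^2 / (Real.pi*(x - (-k:ℤ)))^2) :=
          tsum_mul_left
      _ = (1/(U:ℝ)^2) * ∑' n : ℤ, (Real.sin (Real.pi*x)^2 / (Real.pi*(x - n))^2) := by
          rw [← (Equiv.neg ℤ).tsum_eq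
            (fun n : ℤ => Real.sin (Real.pi*x)^2 / (Real.pi*(x - n))^2)]
          rfl
      _ = 1 / (U : ℝ) ^ 2 := by rw [hkey, mul_one]
end

section
/- Let U, H be integers with 2 ≤ U ≤ H+1, α = 1/U, and let B*_{α,H}(x) = Σ_{|h|≤H} (1/(H+1))(1 - |h|/(H+1)) cos(πhα) e(hx) be the Vaaler majorant kernel. Then Σ_{0≤u<U} (χ*_α ∗ B*_{α,H})(u/U) = 1/(H+1). -/
open scoped Classical

open intervalIntegral

/-- The 1-periodic characteristic function of `[-α/2, α/2)` modulo 1 (ℂ-valued). -/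
noncomputable def chiStarC (α : ℝ) (x : ℝ) : ℂ :=
  if ∃ k : ℤ, x - k ∈ Set.Ico (-(α / 2)) (α / 2) then 1 else 0

/-- Fourier coefficients of the Vaaler majorant kernel `B*_{α,H}`. -/
noncomputable def BStarHat (α : ℝ) (H : ℕ) (h : ℤ) : ℝ :=
  (1 / ((H : ℝ) + 1)) * (1 - |(h : ℝ)| / ((H : ℝ) + 1)) * Real.cos (Real.pi * h * α)

/-- The Vaaler majorant kernel `B*_{α,H}(x) = Σ_{|h|≤H} B̂*_{α,H}(h) e(hx)`. -/
noncomputable def BStar (α : ℝ) (H : ℕ) (x : ℝ) : ℂ :=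
  ∑ h ∈ Finset.Icc (-(H : ℤ)) (H : ℤ),
    (BStarHat α H h : ℂ) * Complex.exp (2 * Real.pi * Complex.I * h * x)

lemma measurable_chiStarC (α : ℝ) : Measurable (chiStarC α) := by
  unfold chiStarC
  have hs : MeasurableSet {x : ℝ | ∃ k : ℤ, x - k ∈ Set.Ico (-(α / 2)) (α / 2)} := by
    have : {x : ℝ | ∃ k : ℤ, x - k ∈ Set.Ico (-(α / 2)) (α / 2)}
        = ⋃ k : ℤ, Set.Ico (-(α / 2) + k) (α / 2 + k) := by
      ext x
      simp only [Set.mem_setOf_eq, Set.mem_iUnion, Set.mem_Ico]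
      constructor
      · rintro ⟨k, h1, h2⟩; exact ⟨k, by linarith, by linarith⟩
      · rintro ⟨k, h1, h2⟩; exact ⟨k, by linarith, by linarith⟩
    rw [this]
    exact MeasurableSet.iUnion fun k => measurableSet_Ico
  exact Measurable.ite hs measurable_const measurable_const

lemma norm_chiStarC_le (α : ℝ) (x : ℝ) : ‖chiStarC α x‖ ≤ 1 := by
  unfold chiStarC; split <;> simp

lemma tiling (U : ℕ) (hU : 1 ≤ U) (t : ℝ) :
    ∑ u ∈ Finset.range U, chiStarC (1 / (U : ℝ)) ((u : ℝ) / U - t) = 1 := by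
  have Upos : (0:ℝ) < U := by exact_mod_cast Nat.pos_of_ne_zero (by omega)
  have UposZ : (0:ℤ) < U := by exact_mod_cast hU
  set m : ℤ := ⌈(U:ℝ) * t + 1/2⌉ - 1 with hm
  have hc1 : (m:ℝ) < (U:ℝ) * t + 1/2 := by
    have := Int.ceil_lt_add_one ((U:ℝ) * t + 1/2)
    have hcast : ((⌈(U:ℝ) * t + 1/2⌉ : ℤ) : ℝ) = (m:ℝ) + 1 := by push_cast [hm]; ring
    linarith [hcast ▸ this]
  have hc2 : (U:ℝ) * t + 1/2 ≤ (m:ℝ) + 1 := by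
    have := Int.le_ceil ((U:ℝ) * t + 1/2)
    have hcast : ((⌈(U:ℝ) * t + 1/2⌉ : ℤ) : ℝ) = (m:ℝ) + 1 := by push_cast [hm]; ring
    linarith [hcast ▸ this]
  have key : ∀ u ∈ Finset.range U,
      chiStarC (1 / (U : ℝ)) ((u : ℝ) / U - t) = if (u:ℤ) = m % U then 1 else 0 := by
    intro u hu
    have huU : u < U := Finset.mem_range.mp hu
    unfold chiStarC
    refine if_congr ?_ rfl rfl
    constructor
    · rintro ⟨k, hk⟩
      obtain ⟨h1, h2⟩ := hk
      set n : ℤ := (u:ℤ) - U * k with hn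
      have hnr : (n:ℝ) = (u:ℝ) - (U:ℝ) * k := by push_cast [hn]; ring
      have hU0 : (U:ℝ) ≠ 0 := ne_of_gt Upos
      have hexp : ((u:ℝ)/U - t - k) * U = (u:ℝ) - (U:ℝ)*t - (U:ℝ)*k := by
        field_simp
      have e1 : (n:ℝ) < (U:ℝ) * t + 1/2 := by
        have := mul_lt_mul_of_pos_right h2 Upos
        rw [hexp] at this
        have hh : (1 / (U:ℝ) / 2) * U = 1/2 := by field_simp
        rw [hh] at this
        rw [hnr]; linarith
      have e2 : (U:ℝ) * t + 1/2 ≤ (n:ℝ) + 1 := by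
        have := mul_le_mul_of_nonneg_right h1 (le_of_lt Upos)
        rw [hexp] at this
        have hh : (-(1 / (U:ℝ) / 2)) * U = -(1/2) := by field_simp
        rw [hh] at this
        rw [hnr]; linarith
      have hmn : m = n := by
        have h3 : (n:ℝ) < (m:ℝ) + 1 := by linarith
        have h4 : (m:ℝ) < (n:ℝ) + 1 := by linarith
        have h3' : n < m + 1 := by exact_mod_cast h3
        have h4' : m < n + 1 := by exact_mod_cast h4
        omega
      have hu : (u:ℤ) = m + U * k := by rw [hmn, hn]; ring
      have h5 : (u:ℤ) % U = m % U := by rw [hu, Int.add_mul_emod_self_left]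
      have h6 : (u:ℤ) % (U:ℤ) = (u:ℤ) := Int.emod_eq_of_lt (Int.ofNat_nonneg u) (by exact_mod_cast huU)
      rw [← h5, h6]
    · intro h
      refine ⟨-(m / U), ?_⟩
      have hk : (u:ℤ) - U * (-(m / U)) = m := by
        rw [h, mul_neg, sub_neg_eq_add]; exact Int.emod_add_mul_ediv m U
      have hkR : (u:ℝ) - (U:ℝ) * ((-(m / U) : ℤ) : ℝ) = (m:ℝ) := by exact_mod_cast hk
      have hU0 : (U:ℝ) ≠ 0 := ne_of_gt Upos
      have hexp : ((u:ℝ)/U - t - ((-(m / U) : ℤ) : ℝ)) * U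
          = (u:ℝ) - (U:ℝ)*t - (U:ℝ)*((-(m / U) : ℤ) : ℝ) := by field_simp
      constructor
      · rw [show -(1 / (U:ℝ) / 2) = (-(1/2)) / U by field_simp]
        rw [div_le_iff₀ Upos, hexp]
        linarith
      · rw [show (1 / (U:ℝ) / 2) = (1/2) / U by field_simp]
        rw [lt_div_iff₀ Upos, hexp]
        linarith
  rw [Finset.sum_congr rfl key]
  have hmod0 : 0 ≤ m % U := Int.emod_nonneg m (by omega)
  have hmodlt : m % U < U := Int.emod_lt_of_pos m UposZ
  set u0 : ℕ := (m % U).toNat with hu0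
  have hu0c : (u0:ℤ) = m % U := Int.toNat_of_nonneg hmod0
  have hu0lt : u0 < U := by omega
  have : ∀ u ∈ Finset.range U, (if (u:ℤ) = m % U then (1:ℂ) else 0) = if u = u0 then 1 else 0 := by
    intro u _
    refine if_congr ?_ rfl rfl
    omega
  rw [Finset.sum_congr rfl this, Finset.sum_ite_eq' (Finset.range U) u0 (fun _ => (1:ℂ)),
    if_pos (Finset.mem_range.mpr hu0lt)]

lemma continuous_BStar (α : ℝ) (H : ℕ) : Continuous (BStar α H) := by
  unfold BStar
  refine continuous_finset_sum (M := ℂ) _ fun h _ => ?_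
  fun_prop

lemma integral_BStar (α : ℝ) (H : ℕ) :
    ∫ t in (-(1 / 2) : ℝ)..(1 / 2), BStar α H t = ((BStarHat α H 0 : ℝ) : ℂ) := by
  unfold BStar
  rw [intervalIntegral.integral_finset_sum]
  · rw [Finset.sum_eq_single 0]
    · simp only [Int.cast_zero, mul_zero, zero_mul, Complex.exp_zero,
        intervalIntegral.integral_const]
      norm_num
    · intro h _ hne
      have hc : (2 * (Real.pi:ℂ) * Complex.I * h) ≠ 0 := by
        simp [Real.pi_ne_zero, Complex.I_ne_zero, Complex.ext_iff, hne]
      have hsplit : Complex.exp (2 * (Real.pi:ℂ) * Complex.I * h * ((1/2 : ℝ):ℂ))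
          = Complex.exp (2 * (Real.pi:ℂ) * Complex.I * h * ((-(1/2) : ℝ):ℂ))
            * Complex.exp ((h:ℂ) * (2 * Real.pi * Complex.I)) := by
        rw [← Complex.exp_add]; congr 1; push_cast; ring
      have hzero : (∫ x in (-(1/2):ℝ)..(1/2),
          Complex.exp (2 * (Real.pi:ℂ) * Complex.I * h * x)) = 0 := by
        rw [integral_exp_mul_complex hc, hsplit, Complex.exp_int_mul_two_pi_mul_I,
          mul_one, sub_self, zero_div]
      rw [_root_.intervalIntegral.integral_const_mul, hzero, mul_zero]
    · intro h0
      simp at h0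
  · intro h _
    apply Continuous.intervalIntegrable
    fun_prop

/-- For `2 ≤ U ≤ H+1` and `α = 1/U`,
`Σ_{0≤u<U} (χ*_α ∗ B*_{α,H})(u/U) = 1/(H+1)`. -/
theorem chiStar_convolution_BStar_sum (U H : ℕ) (hU : 2 ≤ U) (hH : U ≤ H + 1) :
    ∑ u ∈ Finset.range U,
      (∫ t in (-(1 / 2) : ℝ)..(1 / 2), chiStarC (1 / U) ((u : ℝ) / U - t) * BStar (1 / U) H t)
      = 1 / ((H : ℂ) + 1) := by
  have hint : ∀ u ∈ Finset.range U, IntervalIntegrable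
      (fun t => chiStarC (1 / (U:ℝ)) ((u : ℝ) / U - t) * BStar (1 / U) H t)
      MeasureTheory.volume (-(1/2) : ℝ) (1/2 : ℝ) := by
    intro u _
    have hB : IntervalIntegrable (BStar (1 / (U:ℝ)) H) MeasureTheory.volume (-(1/2) : ℝ) (1/2) :=
      (continuous_BStar _ _).intervalIntegrable _ _
    refine hB.mono_fun ?_ ?_
    · refine Measurable.aestronglyMeasurable ?_
      exact ((measurable_chiStarC _).comp (measurable_const.sub measurable_id)).mul
        (continuous_BStar _ _).measurable
    · refine Filter.Eventually.of_forall fun t => ?_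
      calc ‖chiStarC (1 / (U:ℝ)) ((u : ℝ) / U - t) * BStar (1 / U) H t‖
          = ‖chiStarC (1 / (U:ℝ)) ((u : ℝ) / U - t)‖ * ‖BStar (1 / U) H t‖ := norm_mul _ _
        _ ≤ 1 * ‖BStar (1 / U) H t‖ := by
            exact mul_le_mul_of_nonneg_right (norm_chiStarC_le _ _) (norm_nonneg _)
        _ = ‖BStar (1 / U) H t‖ := one_mul _
  rw [← intervalIntegral.integral_finset_sum hint]
  have hpt : ∀ t : ℝ, ∑ u ∈ Finset.range U,
      chiStarC (1 / (U:ℝ)) ((u : ℝ) / U - t) * BStar (1 / U) H t = BStar (1 / U) H t := by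
    intro t
    rw [← Finset.sum_mul, tiling U (by omega) t, one_mul]
  rw [intervalIntegral.integral_congr (g := BStar (1 / (U:ℝ)) H) (fun t _ => hpt t)]
  rw [integral_BStar]
  unfold BStarHat
  push_cast
  simp
end

section
/- For all real M > 0, ξ ∈ ℝ \ ℤ, φ ∈ ℝ, and integers N₁ ≤ N₂: Σ_{N₁ < n ≤ N₂} min(M, |sin π(nξ + φ)|^{-1}) ≪ (3 + ⌊(N₂-N₁)‖ξ‖⌋) · (3M + ‖ξ‖^{-1} log(‖ξ‖^{-1})), with an absolute implied constant. -/
open Finset Real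

/-- Sum of reciprocals of distinct positive integers is at most the harmonic number. -/
lemma aux_sum_inv_int_le : ∀ (n : ℕ) (s : Finset ℤ), s.card = n → (∀ j ∈ s, 1 ≤ j) →
    ∑ j ∈ s, ((j : ℝ))⁻¹ ≤ ∑ i ∈ Finset.range n, ((i : ℝ) + 1)⁻¹ := by
  intro n
  induction n with
  | zero =>
    intro s hs _
    rw [Finset.card_eq_zero] at hs
    simp [hs]
  | succ n ih =>
    intro s hs hpos
    have hne : s.Nonempty := Finset.card_pos.mp (by omega)
    have hm : s.max' hne ∈ s := s.max'_mem hne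
    set m := s.max' hne with hmdef
    have hsub : s ⊆ Finset.Icc 1 m := fun j hj =>
      Finset.mem_Icc.mpr ⟨hpos j hj, s.le_max' j hj⟩
    have hcard : (n : ℤ) + 1 ≤ m := by
      have h1 := Finset.card_le_card hsub
      rw [hs, Int.card_Icc] at h1
      omega
    have herase : (s.erase m).card = n := by
      rw [Finset.card_erase_of_mem hm, hs]
      omega
    have ihm := ih (s.erase m) herase (fun j hj => hpos j (Finset.mem_of_mem_erase hj))
    rw [← Finset.sum_erase_add s _ hm, Finset.sum_range_succ]
    refine add_le_add ihm ?_
    have h2 : ((n : ℝ) + 1) ≤ (m : ℝ) := by exact_mod_cast hcard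
    exact inv_anti₀ (by positivity) h2

lemma aux_sum_inv_int_le' (K : ℕ) (s : Finset ℤ) (hcard : s.card ≤ K)
    (hpos : ∀ j ∈ s, 1 ≤ j) :
    ∑ j ∈ s, ((j : ℝ))⁻¹ ≤ ∑ i ∈ Finset.range K, ((i : ℝ) + 1)⁻¹ :=
  (aux_sum_inv_int_le s.card s rfl hpos).trans
    (Finset.sum_le_sum_of_subset_of_nonneg (Finset.range_subset_range.mpr hcard)
      (fun i _ _ => by positivity))

lemma aux_two_abs_le_abs_sin {x : ℝ} (hx : |x| ≤ 1/2) :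
    2 * |x| ≤ |Real.sin (Real.pi * x)| := by
  wlog h : 0 ≤ x generalizing x
  · push_neg at h
    have h2 := this (x := -x) (by rwa [abs_neg]) (by linarith)
    rwa [abs_neg, mul_neg, Real.sin_neg, abs_neg] at h2
  · rw [abs_of_nonneg h] at hx ⊢
    have h2 : Real.pi * x ≤ Real.pi / 2 := by nlinarith [Real.pi_pos]
    have h3 := Real.mul_le_sin (by positivity) h2
    have h4 : 2 / Real.pi * (Real.pi * x) = 2 * x := by
      field_simp
    rw [h4] at h3
    exact h3.trans (le_abs_self _)

lemma aux_abs_sin_pi_add_int (y : ℝ) (m : ℤ) :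
    |Real.sin (Real.pi * (y + m))| = |Real.sin (Real.pi * y)| := by
  have h : Real.pi * (y + m) = Real.pi * y + m * Real.pi := by ring
  rw [h, Real.sin_add_int_mul_pi, abs_mul]
  rcases Int.even_or_odd m with he | ho
  · rw [he.neg_one_zpow, abs_one, one_mul]
  · rw [ho.neg_one_zpow, abs_neg, abs_one, one_mul]

/-- Bound for a single "class": all points `n*θ+φ` round to the same integer `g`. -/
lemma aux_class_bound {M θ φ : ℝ} (hM : 0 < M) (hθ : 0 < θ) (K : ℕ) (g : ℤ)
    (s : Finset ℤ) (hcard : s.card ≤ K)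
    (hg : ∀ n ∈ s, |(n : ℝ) * θ + φ - g| ≤ 1/2) :
    ∑ n ∈ s, min M (|Real.sin (Real.pi * ((n : ℝ) * θ + φ))|⁻¹)
      ≤ 2 * M + θ⁻¹ * ∑ i ∈ Finset.range K, ((i : ℝ) + 1)⁻¹ := by
  classical
  set c : ℤ := ⌊(φ - g) / θ⌋ with hc
  have hc1 : (c : ℝ) * θ ≤ φ - g := by
    have h := Int.floor_le ((φ - g) / θ)
    rw [← hc] at h
    exact (le_div_iff₀ hθ).mp h
  have hc2 : φ - (g : ℝ) < (c : ℝ) * θ + θ := by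
    have h := Int.lt_floor_add_one ((φ - g) / θ)
    rw [← hc] at h
    have := (div_lt_iff₀ hθ).mp h
    nlinarith
  set f : ℤ → ℝ := fun n => min M (|Real.sin (Real.pi * ((n : ℝ) * θ + φ))|⁻¹) with hf
  have hf0 : ∀ n, 0 ≤ f n := fun n => le_min hM.le (by positivity)
  -- the key per-element bound for positive classes
  have hsin : ∀ n ∈ s, 2 * |(n : ℝ) * θ + φ - g| ≤ |Real.sin (Real.pi * ((n : ℝ) * θ + φ))| := by
    intro n hn
    conv_rhs => rw [show (n : ℝ) * θ + φ = ((n : ℝ) * θ + φ - (g:ℝ)) + ((g : ℤ) : ℝ) from by ring]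
    rw [aux_abs_sin_pi_add_int]
    exact aux_two_abs_le_abs_sin (hg n hn)
  have H0 : (0:ℝ) ≤ ∑ i ∈ Finset.range K, ((i : ℝ) + 1)⁻¹ := by positivity
  -- split the sum
  rw [← Finset.sum_filter_add_sum_filter_not s (fun n => 1 ≤ n + c) f,
      ← Finset.sum_filter_add_sum_filter_not (s.filter (fun n => ¬ 1 ≤ n + c))
        (fun n => n + c ≤ -2) f]
  set sP := s.filter (fun n => 1 ≤ n + c) with hsp
  set sN := (s.filter (fun n => ¬ 1 ≤ n + c)).filter (fun n => n + c ≤ -2) with hsm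
  set sZ := (s.filter (fun n => ¬ 1 ≤ n + c)).filter (fun n => ¬ n + c ≤ -2) with hs0
  have hboundP : ∑ n ∈ sP, f n ≤ 2⁻¹ * θ⁻¹ * ∑ i ∈ Finset.range K, ((i : ℝ) + 1)⁻¹ := by
    have step1 : ∑ n ∈ sP, f n ≤ ∑ n ∈ sP, (2 * θ)⁻¹ * (((n + c : ℤ) : ℝ))⁻¹ := by
      refine Finset.sum_le_sum (fun n hn => ?_)
      have hns : n ∈ s := Finset.mem_of_mem_filter n hn
      have hnc : (1 : ℤ) ≤ n + c := by
        have := Finset.mem_filter.mp hn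
        exact this.2
      have hncR : (1 : ℝ) ≤ ((n + c : ℤ) : ℝ) := by exact_mod_cast hnc
      have hlow : ((n + c : ℤ) : ℝ) * θ ≤ (n : ℝ) * θ + φ - g := by
        push_cast
        nlinarith
      have habs : 2 * θ * ((n + c : ℤ) : ℝ) ≤ |Real.sin (Real.pi * ((n : ℝ) * θ + φ))| := by
        have h2 : ((n + c : ℤ) : ℝ) * θ ≤ |(n : ℝ) * θ + φ - g| := by
          refine hlow.trans (le_abs_self _)
        nlinarith [hsin n hns]
      have hpos2 : (0:ℝ) < 2 * θ * ((n + c : ℤ) : ℝ) := by nlinarith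
      have := inv_anti₀ hpos2 habs
      refine (min_le_right _ _).trans (this.trans ?_)
      rw [mul_inv]
    have step2 : ∑ n ∈ sP, (2 * θ)⁻¹ * (((n + c : ℤ) : ℝ))⁻¹
        = (2 * θ)⁻¹ * ∑ k ∈ sP.image (fun n => n + c), ((k : ℝ))⁻¹ := by
      rw [Finset.sum_image (fun a _ b _ h => by omega), ← Finset.mul_sum]
    have step3 : ∑ k ∈ sP.image (fun n => n + c), ((k : ℝ))⁻¹
        ≤ ∑ i ∈ Finset.range K, ((i : ℝ) + 1)⁻¹ := by
      refine aux_sum_inv_int_le' K _ (le_trans (Finset.card_image_le)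
        (le_trans (Finset.card_filter_le _ _) hcard)) ?_
      intro k hk
      obtain ⟨n, hn, rfl⟩ := Finset.mem_image.mp hk
      exact (Finset.mem_filter.mp hn).2
    calc ∑ n ∈ sP, f n ≤ (2 * θ)⁻¹ * ∑ k ∈ sP.image (fun n => n + c), ((k : ℝ))⁻¹ := by
          rw [← step2]; exact step1
      _ ≤ (2 * θ)⁻¹ * ∑ i ∈ Finset.range K, ((i : ℝ) + 1)⁻¹ := by
          refine mul_le_mul_of_nonneg_left step3 (by positivity)
      _ = 2⁻¹ * θ⁻¹ * ∑ i ∈ Finset.range K, ((i : ℝ) + 1)⁻¹ := by rw [mul_inv]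
  have hboundN : ∑ n ∈ sN, f n ≤ 2⁻¹ * θ⁻¹ * ∑ i ∈ Finset.range K, ((i : ℝ) + 1)⁻¹ := by
    have step1 : ∑ n ∈ sN, f n ≤ ∑ n ∈ sN, (2 * θ)⁻¹ * (((-(n + c) - 1 : ℤ) : ℝ))⁻¹ := by
      refine Finset.sum_le_sum (fun n hn => ?_)
      have hns : n ∈ s := Finset.mem_of_mem_filter n (Finset.mem_of_mem_filter n hn)
      have hnc : n + c ≤ -2 := (Finset.mem_filter.mp hn).2
      have hncR : (1 : ℝ) ≤ ((-(n + c) - 1 : ℤ) : ℝ) := by exact_mod_cast (by omega : (1:ℤ) ≤ -(n + c) - 1)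
      have hhigh : (n : ℝ) * θ + φ - g ≤ -(((-(n + c) - 1 : ℤ) : ℝ) * θ) := by
        push_cast
        nlinarith
      have habs : 2 * θ * ((-(n + c) - 1 : ℤ) : ℝ) ≤ |Real.sin (Real.pi * ((n : ℝ) * θ + φ))| := by
        have h2 : ((-(n + c) - 1 : ℤ) : ℝ) * θ ≤ |(n : ℝ) * θ + φ - g| := by
          rw [abs_sub_comm]
          refine le_trans ?_ (le_abs_self _)
          nlinarith
        nlinarith [hsin n hns]
      have hpos2 : (0:ℝ) < 2 * θ * ((-(n + c) - 1 : ℤ) : ℝ) := by nlinarith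
      have := inv_anti₀ hpos2 habs
      refine (min_le_right _ _).trans (this.trans ?_)
      rw [mul_inv]
    have step2 : ∑ n ∈ sN, (2 * θ)⁻¹ * (((-(n + c) - 1 : ℤ) : ℝ))⁻¹
        = (2 * θ)⁻¹ * ∑ k ∈ sN.image (fun n => -(n + c) - 1), ((k : ℝ))⁻¹ := by
      rw [Finset.sum_image (fun a _ b _ h => by omega), ← Finset.mul_sum]
    have step3 : ∑ k ∈ sN.image (fun n => -(n + c) - 1), ((k : ℝ))⁻¹
        ≤ ∑ i ∈ Finset.range K, ((i : ℝ) + 1)⁻¹ := by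
      refine aux_sum_inv_int_le' K _ (le_trans (Finset.card_image_le)
        (le_trans (le_trans (Finset.card_filter_le _ _) (Finset.card_filter_le _ _)) hcard)) ?_
      intro k hk
      obtain ⟨n, hn, rfl⟩ := Finset.mem_image.mp hk
      have := (Finset.mem_filter.mp hn).2
      omega
    calc ∑ n ∈ sN, f n ≤ (2 * θ)⁻¹ * ∑ k ∈ sN.image (fun n => -(n + c) - 1), ((k : ℝ))⁻¹ := by
          rw [← step2]; exact step1
      _ ≤ (2 * θ)⁻¹ * ∑ i ∈ Finset.range K, ((i : ℝ) + 1)⁻¹ := by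
          refine mul_le_mul_of_nonneg_left step3 (by positivity)
      _ = 2⁻¹ * θ⁻¹ * ∑ i ∈ Finset.range K, ((i : ℝ) + 1)⁻¹ := by rw [mul_inv]
  have hboundZ : ∑ n ∈ sZ, f n ≤ 2 * M := by
    have hcard0 : sZ.card ≤ 2 := by
      have : sZ.card ≤ ({0, -1} : Finset ℤ).card := by
        refine Finset.card_le_card_of_injOn (fun n => n + c) ?_ (fun a _ b _ h => by simpa using h)
        intro n hn
        have h1 := (Finset.mem_filter.mp (Finset.mem_of_mem_filter n hn)).2
        have h2 := (Finset.mem_filter.mp hn).2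
        simp only [Finset.coe_insert, Finset.coe_singleton, Set.mem_insert_iff, Set.mem_singleton_iff, Finset.mem_coe, Finset.mem_insert, Finset.mem_singleton]
        omega
      simpa using this
    calc ∑ n ∈ sZ, f n ≤ ∑ _n ∈ sZ, M := Finset.sum_le_sum (fun n _ => min_le_left _ _)
      _ = sZ.card * M := by rw [Finset.sum_const, nsmul_eq_mul]
      _ ≤ 2 * M := by
          have : (sZ.card : ℝ) ≤ 2 := by exact_mod_cast hcard0
          nlinarith
  linarith

lemma aux_block_bound {M θ φ : ℝ} (hM : 0 < M) (hθ : 0 < θ) (K : ℕ)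
    (hK : (K : ℝ) * θ ≤ 1) (a b : ℤ) (hab : b ≤ a + K) :
    ∑ n ∈ Finset.Ioc a b, min M (|Real.sin (Real.pi * ((n : ℝ) * θ + φ))|⁻¹)
      ≤ 4 * M + 2 * θ⁻¹ * ∑ i ∈ Finset.range K, ((i : ℝ) + 1)⁻¹ := by
  classical
  set r : ℤ := round (((a : ℝ) + 1) * θ + φ) with hr
  have hmono : ∀ n ∈ Finset.Ioc a b,
      r ≤ round ((n : ℝ) * θ + φ) ∧ round ((n : ℝ) * θ + φ) ≤ r + 1 := by
    intro n hn
    obtain ⟨hn1, hn2⟩ := Finset.mem_Ioc.mp hn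
    have hcast1 : ((a : ℝ) + 1) ≤ (n : ℝ) := by exact_mod_cast hn1
    have hcast2 : (n : ℝ) ≤ (a : ℝ) + K := by exact_mod_cast le_trans hn2 hab
    have hx1 : ((a : ℝ) + 1) * θ + φ ≤ (n : ℝ) * θ + φ := by nlinarith
    have hx2 : (n : ℝ) * θ + φ ≤ (((a : ℝ) + 1) * θ + φ) + 1 := by nlinarith
    constructor
    · rw [hr, round_eq, round_eq]
      exact Int.floor_mono (by linarith)
    · have h1 : round ((((a : ℝ) + 1) * θ + φ) + 1) = r + 1 := by
        rw [show (1:ℝ) = ((1:ℤ):ℝ) from by norm_num, round_add_intCast, hr]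
        norm_num
      rw [← h1, round_eq, round_eq]
      exact Int.floor_mono (by linarith)
  have hcardIoc : (Finset.Ioc a b).card ≤ K := by
    rw [Int.card_Ioc]
    omega
  rw [← Finset.sum_filter_add_sum_filter_not (Finset.Ioc a b)
      (fun n => round ((n : ℝ) * θ + φ) = r)]
  have hgs1 : ∀ n ∈ (Finset.Ioc a b).filter (fun n : ℤ => round ((n : ℝ) * θ + φ) = r),
      |(n : ℝ) * θ + φ - (r : ℝ)| ≤ 1/2 := by
    intro n hn
    have heq := (Finset.mem_filter.mp hn).2
    have := abs_sub_round ((n : ℝ) * θ + φ)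
    rw [heq] at this
    exact this
  have hgs2 : ∀ n ∈ (Finset.Ioc a b).filter (fun n : ℤ => ¬ round ((n : ℝ) * θ + φ) = r),
      |(n : ℝ) * θ + φ - ((r + 1 : ℤ) : ℝ)| ≤ 1/2 := by
    intro n hn
    have hmem := Finset.mem_of_mem_filter n hn
    have hne := (Finset.mem_filter.mp hn).2
    have heq : round ((n : ℝ) * θ + φ) = r + 1 := by
      have := hmono n hmem
      omega
    have := abs_sub_round ((n : ℝ) * θ + φ)
    rw [heq] at this
    exact_mod_cast this
  have h1 := aux_class_bound hM hθ K r
      ((Finset.Ioc a b).filter (fun n => round ((n : ℝ) * θ + φ) = r))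
      (le_trans (Finset.card_filter_le _ _) hcardIoc) hgs1
  have h2 := aux_class_bound hM hθ K (r + 1)
      ((Finset.Ioc a b).filter (fun n => ¬ round ((n : ℝ) * θ + φ) = r))
      (le_trans (Finset.card_filter_le _ _) hcardIoc) hgs2
  linarith

lemma aux_blocks_bound {M θ φ : ℝ} (hM : 0 < M) (hθ : 0 < θ) (K : ℕ)
    (hK : (K : ℝ) * θ ≤ 1) (N₁ : ℤ) :
    ∀ (B : ℕ) (N₂ : ℤ), N₂ - N₁ ≤ (B : ℤ) * K →
      ∑ n ∈ Finset.Ioc N₁ N₂, min M (|Real.sin (Real.pi * ((n : ℝ) * θ + φ))|⁻¹)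
        ≤ (B : ℝ) * (4 * M + 2 * θ⁻¹ * ∑ i ∈ Finset.range K, ((i : ℝ) + 1)⁻¹) := by
  intro B
  have hE : 0 ≤ 4 * M + 2 * θ⁻¹ * ∑ i ∈ Finset.range K, ((i : ℝ) + 1)⁻¹ := by positivity
  induction B with
  | zero =>
    intro N₂ h
    have hemp : Finset.Ioc N₁ N₂ = ∅ := Finset.Ioc_eq_empty (by simp at h ⊢; omega)
    simp [hemp]
  | succ B ih =>
    intro N₂ h
    rcases le_or_gt N₂ N₁ with hle | hlt
    · have hemp : Finset.Ioc N₁ N₂ = ∅ := Finset.Ioc_eq_empty (not_lt.mpr hle)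
      rw [hemp]
      simp only [Finset.sum_empty]
      positivity
    · set m : ℤ := max N₁ (N₂ - K) with hm
      have h1 : N₁ ≤ m := le_max_left _ _
      have h2 : m ≤ N₂ := max_le hlt.le (by omega)
      have hdisj : Disjoint (Finset.Ioc N₁ m) (Finset.Ioc m N₂) := by
        rw [Finset.disjoint_left]
        intro x hx hx2
        rw [Finset.mem_Ioc] at hx hx2
        omega
      rw [← Finset.Ioc_union_Ioc_eq_Ioc h1 h2, Finset.sum_union hdisj]
      have hb := aux_block_bound (φ := φ) hM hθ K hK m N₂ (by omega : N₂ ≤ m + K)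
      have hmK : m - N₁ ≤ (B : ℤ) * K := by
        rcases max_choice N₁ (N₂ - (K:ℤ)) with hc | hc <;> rw [hm, hc]
        · rw [sub_self]
          positivity
        · push_cast at h ⊢
          linarith
      have hih := ih m hmK
      push_cast
      push_cast at hih
      linarith

set_option maxHeartbeats 1000000 in
/-- For all `M > 0`, `ξ ∈ ℝ \ ℤ`, `φ ∈ ℝ` and integers `N₁ ≤ N₂`:
`Σ_{N₁ < n ≤ N₂} min(M, |sin π(nξ+φ)|⁻¹)
  ≪ (3 + ⌊(N₂-N₁)‖ξ‖⌋)(3M + ‖ξ‖⁻¹ log ‖ξ‖⁻¹)` with an absolute constant. -/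
theorem sum_of_minimums_bound :
    ∃ C : ℝ, 0 < C ∧ ∀ (M ξ φ : ℝ) (N₁ N₂ : ℤ), 0 < M → (∀ k : ℤ, ξ ≠ k) → N₁ ≤ N₂ →
      ∑ n ∈ Finset.Ioc N₁ N₂, min M (|Real.sin (Real.pi * (n * ξ + φ))|⁻¹)
        ≤ C * (3 + (⌊((N₂ : ℝ) - N₁) * |ξ - round ξ|⌋ : ℝ))
            * (3 * M + |ξ - round ξ|⁻¹ * Real.log (|ξ - round ξ|⁻¹)) := by
  refine ⟨12, by norm_num, ?_⟩
  intro M ξ φ N₁ N₂ hM hξ hN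
  set θ : ℝ := |ξ - round ξ| with hθdef
  have hθpos : 0 < θ := by
    rw [hθdef, abs_pos, sub_ne_zero]
    exact fun h => hξ (round ξ) (by exact_mod_cast h)
  have hθhalf : θ ≤ 1/2 := abs_sub_round ξ
  -- replace ξ by θ with a possibly different phase ψ
  obtain ⟨ψ, hψ⟩ : ∃ ψ : ℝ, ∀ n : ℤ, |Real.sin (Real.pi * (n * ξ + φ))|
      = |Real.sin (Real.pi * (n * θ + ψ))| := by
    rcases le_or_gt 0 (ξ - round ξ) with h | h
    · refine ⟨φ, fun n => ?_⟩
      have hθ' : θ = ξ - round ξ := abs_of_nonneg h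
      have heq : (n:ℝ) * ξ + φ = ((n:ℝ) * θ + φ) + ((n * round ξ : ℤ) : ℝ) := by
        push_cast
        rw [hθ']
        ring
      rw [heq, aux_abs_sin_pi_add_int]
    · refine ⟨-φ, fun n => ?_⟩
      have hθ' : θ = -(ξ - round ξ) := abs_of_neg h
      have heq : (n:ℝ) * ξ + φ = -((n:ℝ) * θ + -φ) + ((n * round ξ : ℤ) : ℝ) := by
        push_cast
        rw [hθ']
        ring
      rw [heq, aux_abs_sin_pi_add_int, mul_neg, Real.sin_neg, abs_neg]
  have hsum : ∑ n ∈ Finset.Ioc N₁ N₂, min M (|Real.sin (Real.pi * (n * ξ + φ))|⁻¹)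
      = ∑ n ∈ Finset.Ioc N₁ N₂, min M (|Real.sin (Real.pi * ((n : ℝ) * θ + ψ))|⁻¹) :=
    Finset.sum_congr rfl (fun n _ => by rw [hψ n])
  rw [hsum]
  -- basic facts about θ⁻¹
  have hinv2 : (2 : ℝ) ≤ θ⁻¹ := by
    rw [show (2:ℝ) = (1/2 : ℝ)⁻¹ from by norm_num]
    exact inv_anti₀ hθpos hθhalf
  have hinvpos : (0:ℝ) < θ⁻¹ := by positivity
  -- the block length K
  set K : ℕ := ⌊θ⁻¹⌋.toNat with hKdef
  have hKfl : (2 : ℤ) ≤ ⌊θ⁻¹⌋ := Int.le_floor.mpr (by exact_mod_cast hinv2)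
  have hK2 : 2 ≤ K := by omega
  have hKzint : ((K : ℤ)) = ⌊θ⁻¹⌋ := by
    rw [hKdef]
    exact Int.toNat_of_nonneg (by omega)
  have hKcast : (K : ℝ) = ((⌊θ⁻¹⌋ : ℤ) : ℝ) := by exact_mod_cast congrArg (fun z : ℤ => (z : ℝ)) hKzint
  have hKle : (K : ℝ) ≤ θ⁻¹ := by
    rw [hKcast]
    exact Int.floor_le _
  have hKθ : (K : ℝ) * θ ≤ 1 := by
    calc (K : ℝ) * θ ≤ θ⁻¹ * θ := by nlinarith
      _ = 1 := inv_mul_cancel₀ (ne_of_gt hθpos)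
  have hKlow : θ⁻¹ ≤ 2 * (K : ℝ) := by
    have hlt : θ⁻¹ < (K : ℝ) + 1 := by
      rw [hKcast]
      exact Int.lt_floor_add_one _
    have : (2 : ℝ) ≤ (K : ℝ) := by exact_mod_cast hK2
    linarith
  -- number of blocks
  have hKz : (0 : ℤ) < (K : ℤ) := by exact_mod_cast (by omega : 0 < K)
  set q : ℤ := (N₂ - N₁) / (K : ℤ) with hq
  have hq0 : 0 ≤ q := Int.ediv_nonneg (by omega) hKz.le
  set B : ℕ := q.toNat + 1 with hB
  have hBcast : (B : ℤ) = q + 1 := by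
    rw [hB]
    push_cast
    omega
  have hDB : N₂ - N₁ ≤ (B : ℤ) * K := by
    have hdm := Int.mul_ediv_add_emod (N₂ - N₁) (K : ℤ)
    have hmod := Int.emod_lt_of_pos (N₂ - N₁) hKz
    rw [hBcast]
    nlinarith [hdm, hmod]
  have hmain := aux_blocks_bound (φ := ψ) hM hθpos K hKθ N₁ B N₂ hDB
  refine hmain.trans ?_
  -- harmonic bound
  set H : ℝ := ∑ i ∈ Finset.range K, ((i : ℝ) + 1)⁻¹ with hH
  have hHharm : H = (harmonic K : ℝ) := by
    rw [hH, harmonic]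
    push_cast
    rfl
  have hlogK : Real.log K ≤ Real.log θ⁻¹ :=
    Real.log_le_log (by positivity) hKle
  have hHbound : H ≤ 1 + Real.log θ⁻¹ := by
    rw [hHharm]
    exact (harmonic_le_one_add_log K).trans (by linarith)
  set L : ℝ := Real.log θ⁻¹ with hL
  have hL2 : Real.log 2 ≤ L := Real.log_le_log (by norm_num) hinv2
  have hLlow : (0.6931471803 : ℝ) ≤ L := le_trans Real.log_two_gt_d9.le hL2
  have hH0 : 0 ≤ H := by
    rw [hH]
    exact Finset.sum_nonneg fun i _ => by positivity
  -- bound the block count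
  set F : ℝ := (⌊((N₂ : ℝ) - N₁) * θ⌋ : ℝ) with hF
  have hD0 : (0:ℝ) ≤ (N₂ : ℝ) - N₁ := by
    have : (N₁ : ℝ) ≤ N₂ := by exact_mod_cast hN
    linarith
  have hF0 : (0:ℝ) ≤ F := by
    rw [hF]
    exact_mod_cast Int.floor_nonneg.mpr (mul_nonneg hD0 hθpos.le)
  have hqK : (q : ℝ) * (K : ℝ) ≤ (N₂ : ℝ) - N₁ := by
    have h1 : q * (K : ℤ) ≤ N₂ - N₁ := Int.ediv_mul_le _ (ne_of_gt hKz)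
    exact_mod_cast h1
  have hqbound : (q : ℝ) ≤ 2 * θ * ((N₂ : ℝ) - N₁) := by
    have hq0R : (0:ℝ) ≤ (q : ℝ) := by exact_mod_cast hq0
    have h1 : (q : ℝ) * 1 ≤ (q : ℝ) * (2 * (K:ℝ) * θ) := by
      apply mul_le_mul_of_nonneg_left _ hq0R
      calc (1:ℝ) = θ⁻¹ * θ := (inv_mul_cancel₀ (ne_of_gt hθpos)).symm
        _ ≤ 2 * (K:ℝ) * θ := by nlinarith
    have h2 : (q : ℝ) * (2 * (K:ℝ) * θ) = 2 * θ * ((q:ℝ) * (K:ℝ)) := by ring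
    nlinarith
  have hFfloor : ((N₂ : ℝ) - N₁) * θ < F + 1 := by
    rw [hF]
    exact Int.lt_floor_add_one _
  have hBbound : (B : ℝ) ≤ 2 * (3 + F) := by
    have hqt : ((q.toNat : ℤ)) = q := Int.toNat_of_nonneg hq0
    have hBr : (B : ℝ) = (q : ℝ) + 1 := by
      have hqt2 : ((q.toNat : ℕ) : ℝ) = (q : ℝ) := by exact_mod_cast hqt
      rw [hB]
      push_cast
      rw [hqt2]
    rw [hBr]
    linarith [hqbound, hFfloor, hF0]
  -- bound the per-block quantity
  have hEbound : 4 * M + 2 * θ⁻¹ * H ≤ 6 * (3 * M + θ⁻¹ * L) := by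
    have h1 : 2 * θ⁻¹ * H ≤ 2 * θ⁻¹ * (1 + L) :=
      mul_le_mul_of_nonneg_left hHbound (by linarith)
    have h2 : 1 + L ≤ 3 * L := by linarith
    nlinarith
  have hE0 : (0:ℝ) ≤ 4 * M + 2 * θ⁻¹ * H := by nlinarith
  have hB0 : (0:ℝ) ≤ (B : ℝ) := by positivity
  calc (B : ℝ) * (4 * M + 2 * θ⁻¹ * H)
      ≤ (2 * (3 + F)) * (6 * (3 * M + θ⁻¹ * L)) := by
        apply mul_le_mul hBbound hEbound hE0 (by linarith)
    _ = 12 * (3 + F) * (3 * M + θ⁻¹ * L) := by ring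
end

section
/- For all integers a, b, m with m ≥ 1: |Σ_{n=0}^{m-1} e((an² + bn)/m)| ≤ √(2m·gcd(a,m)). -/
open Complex Finset

noncomputable def eR (x : ℝ) : ℂ := Complex.exp (2 * Real.pi * Complex.I * x)

lemma eR_add (x y : ℝ) : eR (x + y) = eR x * eR y := by
  simp only [eR]; rw [← Complex.exp_add]; push_cast; ring_nf

lemma eR_int (k : ℤ) : eR k = 1 := by
  rw [eR, show ((2:ℂ) * Real.pi * Complex.I * ((k:ℝ):ℂ)) = (k:ℂ) * (2 * Real.pi * Complex.I) by push_cast; ring]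
  exact Complex.exp_int_mul_two_pi_mul_I k

lemma abs_eR (x : ℝ) : ‖eR x‖ = 1 := by
  rw [eR, show ((2:ℂ) * Real.pi * Complex.I * (x:ℂ)) = ((2 * Real.pi * x : ℝ) : ℂ) * Complex.I by push_cast; ring]
  exact Complex.norm_exp_ofReal_mul_I _

lemma conj_eR (x : ℝ) : (starRingEnd ℂ) (eR x) = eR (-x) := by
  rw [eR, ← Complex.exp_conj]
  simp only [map_mul, map_ofNat, Complex.conj_I, Complex.conj_ofReal, eR]
  push_cast; ring_nf

lemma eR_pow (x : ℝ) (n : ℕ) : eR x ^ n = eR (n * x) := by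
  rw [eR, eR, ← Complex.exp_nat_mul]
  push_cast; ring_nf

lemma eR_eq_one_iff (k : ℤ) (m : ℕ) (hm : 0 < m) : eR ((k:ℝ)/m) = 1 ↔ (m:ℤ) ∣ k := by
  constructor
  · intro h
    rw [eR, Complex.exp_eq_one_iff] at h
    obtain ⟨n, hn⟩ := h
    have h2πI : ((2:ℂ) * Real.pi * Complex.I) ≠ 0 := by
      simp [Real.pi_ne_zero, Complex.I_ne_zero, Complex.ofReal_ne_zero]
    have hn' : ((2:ℂ) * Real.pi * Complex.I) * (((k:ℝ)/m : ℝ):ℂ) =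
        ((2:ℂ) * Real.pi * Complex.I) * (n:ℂ) := by rw [hn]; ring
    have h2 : (((k:ℝ)/m : ℝ):ℂ) = (n:ℂ) := mul_left_cancel₀ h2πI hn'
    have h3 : (k:ℝ)/m = (n:ℝ) := by exact_mod_cast h2
    have hm' : (m:ℝ) ≠ 0 := by positivity
    have h4 : (k:ℝ) = (m:ℝ) * n := by field_simp at h3; linarith
    exact ⟨n, by exact_mod_cast h4⟩
  · rintro ⟨c, rfl⟩
    have hm' : (m:ℝ) ≠ 0 := by positivity
    have h1 : (((m*c:ℤ):ℝ)/(m:ℝ) : ℝ) = ((c:ℤ):ℝ) := by push_cast; field_simp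
    rw [h1]; exact eR_int c

lemma geom_eR (k : ℤ) (m : ℕ) (hm : 0 < m) :
    ∑ n ∈ range m, eR ((k:ℝ)/m) ^ n = if (m:ℤ) ∣ k then (m:ℂ) else 0 := by
  by_cases hd : (m:ℤ) ∣ k
  · rw [if_pos hd, (eR_eq_one_iff k m hm).2 hd]
    simp
  · rw [if_neg hd]
    have hz : eR ((k:ℝ)/m) ≠ 1 := fun h => hd ((eR_eq_one_iff k m hm).1 h)
    rw [geom_sum_eq hz, eR_pow]
    have hm' : (m:ℝ) ≠ 0 := by positivity
    have : (m:ℝ) * ((k:ℝ)/m) = ((k:ℤ):ℝ) := by field_simp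
    rw [this, eR_int]
    simp

lemma shift_sum (m : ℕ) (h : ℕ) :
    ∀ (g : ℕ → ℂ), (∀ n, g (n + m) = g n) →
    ∑ n ∈ range m, g (n + h) = ∑ n ∈ range m, g n := by
  induction h with
  | zero => simp
  | succ h ih =>
    intro g hg
    have step : ∀ (g : ℕ → ℂ), (∀ n, g (n + m) = g n) →
        ∑ n ∈ range m, g (n + 1) = ∑ n ∈ range m, g n := by
      intro g hg
      have h1 : ∑ n ∈ range m, g (n + 1) = ∑ n ∈ range (m+1), g n - g 0 := by
        rw [Finset.sum_range_succ' (fun n => g n) m]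
        simp
      rw [h1, Finset.sum_range_succ, show g m = g 0 from by simpa using hg 0]
      abel
    have hg' : ∀ n, g (n + m + 1) = g (n + 1) := fun n => by
      rw [show n + m + 1 = (n+1) + m by ring, hg]
    calc ∑ n ∈ range m, g (n + (h+1)) = ∑ n ∈ range m, (fun j => g (j + 1)) (n + h) := by
          exact Finset.sum_congr rfl fun n _ => by show g (n + (h+1)) = g (n + h + 1); rw [show n + (h+1) = n + h + 1 by ring]
      _ = ∑ n ∈ range m, g (n + 1) := ih (fun j => g (j + 1)) hg'
      _ = ∑ n ∈ range m, g n := step g hg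

lemma count_multiples (c d : ℕ) (hc : 0 < c) :
    ((range (c * d)).filter (fun h => c ∣ h)).card = d := by
  have himg : (range (c * d)).filter (fun h => c ∣ h) = (range d).image (fun j => c * j) := by
    ext h
    simp only [mem_filter, mem_range, mem_image]
    constructor
    · rintro ⟨hlt, j, rfl⟩
      exact ⟨j, lt_of_mul_lt_mul_left hlt (Nat.zero_le c), rfl⟩
    · rintro ⟨j, hj, rfl⟩
      exact ⟨(Nat.mul_lt_mul_left hc).2 hj, j, rfl⟩
  rw [himg, Finset.card_image_of_injective _ (fun x y hxy =>
    Nat.eq_of_mul_eq_mul_left hc hxy), Finset.card_range]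

lemma count_sol (a : ℤ) (m : ℕ) (hm : 0 < m) :
    ((range m).filter (fun h : ℕ => (m:ℤ) ∣ 2 * a * (h:ℤ))).card = Int.gcd (2*a) m := by
  set x := (2*a).natAbs with hx
  set d := Nat.gcd x m with hd
  have hdpos : 0 < d := Nat.gcd_pos_of_pos_right _ hm
  have hdm : d ∣ m := Nat.gcd_dvd_right x m
  set c := m / d with hc
  have hcd : m = c * d := by
    rw [hc, Nat.div_mul_cancel hdm]
  have hx' : d * (x / d) = x := Nat.mul_div_cancel' (Nat.gcd_dvd_left x m)
  have hcpos : 0 < c := by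
    rcases Nat.eq_zero_or_pos c with h | h
    · rw [h, zero_mul] at hcd; omega
    · exact h
  have hiff : ∀ h : ℕ, ((m:ℤ) ∣ 2 * a * (h:ℤ)) ↔ c ∣ h := by
    intro h
    rw [show (2:ℤ) * a * h = (2*a) * (h:ℤ) by ring, Int.natCast_dvd,
      Int.natAbs_mul, Int.natAbs_natCast, ← hx]
    constructor
    · intro hdvd
      have hdvd' : d * c ∣ d * ((x / d) * h) := by
        rw [← mul_assoc, hx', ← Nat.mul_comm c d, ← hcd]; exact hdvd
      have h2 : c ∣ (x / d) * h := (Nat.mul_dvd_mul_iff_left hdpos).1 hdvd'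
      have hcop : Nat.Coprime c (x / d) := by
        have := Nat.coprime_div_gcd_div_gcd (m := x) (n := m) hdpos
        exact Nat.Coprime.symm (by simpa [← hd, ← hc] using this)
      exact hcop.dvd_of_dvd_mul_left h2
    · rintro ⟨j, rfl⟩
      refine ⟨(x / d) * j, ?_⟩
      calc x * (c * j) = (d * (x / d)) * (c * j) := by rw [hx']
        _ = (c * d) * ((x / d) * j) := by ring
        _ = m * ((x / d) * j) := by rw [← hcd]
  have hcount := count_multiples c d hcpos
  rw [← hcd] at hcount
  rw [filter_congr (fun h _ => by rw [hiff h]), hcount, Int.gcd, Int.natAbs_natCast]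

lemma gcd_two_le (a : ℤ) (m : ℕ) (hm : 0 < m) : (Int.gcd (2*a) m : ℕ) ≤ 2 * Int.gcd a m := by
  have h1 : Int.gcd (2*a) m ∣ 2 * Int.gcd a m := by
    have h2 : Nat.gcd ((2*a).natAbs) m ∣ Nat.gcd ((2*a).natAbs) (2*m) :=
      Nat.gcd_dvd_gcd_of_dvd_right _ ⟨2, by ring⟩
    have h3 : (2*a).natAbs = 2 * a.natAbs := by
      rw [Int.natAbs_mul]; rfl
    have h4 : Nat.gcd (2 * a.natAbs) (2*m) = 2 * Nat.gcd a.natAbs m := Nat.gcd_mul_left 2 _ _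
    rw [Int.gcd, Int.gcd, Int.natAbs_natCast]
    calc Nat.gcd (2*a).natAbs m ∣ Nat.gcd ((2*a).natAbs) (2*m) := h2
      _ = 2 * Nat.gcd a.natAbs m := by rw [h3, h4]
  refine Nat.le_of_dvd ?_ h1
  have : 0 < Int.gcd a m := by
    rw [Int.gcd, Int.natAbs_natCast]; exact Nat.gcd_pos_of_pos_right _ hm
  omega

/-- complete quadratic Gauss sum bound:
`|Σ_{n=0}^{m-1} e((an² + bn)/m)| ≤ √(2m·gcd(a,m))`. -/
theorem complete_gauss_sum_bound (a b : ℤ) (m : ℕ) (hm : 1 ≤ m) :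
    ‖(∑ n ∈ Finset.range m,
        Complex.exp (2 * Real.pi * Complex.I * (((a * n ^ 2 + b * n : ℤ) : ℝ) / m)))‖
      ≤ Real.sqrt (2 * m * Int.gcd a m) := by
  have hm0 : 0 < m := hm
  have hmR : (m:ℝ) ≠ 0 := by positivity
  set P : ℕ → ℤ := fun n => a * n ^ 2 + b * n with hP
  set F : ℕ → ℂ := fun n => eR ((P n : ℝ)/m) with hFdef
  -- the statement sum equals ∑ F n
  have hS : (∑ n ∈ Finset.range m,
      Complex.exp (2 * Real.pi * Complex.I * (((a * n ^ 2 + b * n : ℤ) : ℝ) / m)))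
      = ∑ n ∈ range m, F n := by
    refine Finset.sum_congr rfl fun n _ => ?_
    simp only [hFdef, eR, hP]
    congr 1
    push_cast
    ring
  rw [hS]
  set S : ℂ := ∑ n ∈ range m, F n with hSdef
  -- periodicity
  have hF : ∀ n, F (n + m) = F n := by
    intro n
    have hkey : ((P (n+m) : ℝ)/m) = (P n : ℝ)/m + ((2*a*n + a*m + b : ℤ):ℝ) := by
      have h1 : P (n+m) = P n + m * (2*a*n + a*m + b) := by
        simp only [hP]; push_cast; ring
      rw [h1]; push_cast; field_simp
    simp only [hFdef]
    rw [hkey, eR_add, eR_int, mul_one]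
  -- cross terms
  have hcross : ∀ n h : ℕ, F (n + h) * (starRingEnd ℂ) (F n)
      = eR (((a*h^2 + b*h : ℤ):ℝ)/m) * (eR (((2*a*h : ℤ):ℝ)/m)) ^ n := by
    intro n h
    have h1 : ((P (n+h) : ℝ)/m) = (P n : ℝ)/m + (((a*h^2 + b*h : ℤ):ℝ)/m + (n:ℝ) * (((2*a*h : ℤ):ℝ)/m)) := by
      have h2 : P (n+h) = P n + (a*h^2 + b*h) + n * (2*a*h) := by
        simp only [hP]; push_cast; ring
      rw [h2]; push_cast; field_simp; ring
    simp only [hFdef]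
    rw [h1, eR_add, eR_add, eR_pow]
    have hns : F n * (starRingEnd ℂ) (F n) = 1 := by
      rw [Complex.mul_conj]
      norm_cast
      rw [← Complex.sq_norm]
      simp [hFdef, abs_eR]
    calc eR ((P n:ℝ)/m) * (eR (((a*h^2 + b*h : ℤ):ℝ)/m) * eR ((n:ℝ) * (((2*a*h : ℤ):ℝ)/m))) * (starRingEnd ℂ) (F n)
        = (F n * (starRingEnd ℂ) (F n)) * (eR (((a*h^2 + b*h : ℤ):ℝ)/m) * eR ((n:ℝ) * (((2*a*h : ℤ):ℝ)/m))) := by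
          simp only [hFdef]; ring
      _ = eR (((a*h^2 + b*h : ℤ):ℝ)/m) * eR ((n:ℝ) * (((2*a*h : ℤ):ℝ)/m)) := by rw [hns, one_mul]
  -- T h
  have hT : ∀ h : ℕ, ∑ n ∈ range m, F (n + h) * (starRingEnd ℂ) (F n)
      = eR (((a*h^2 + b*h : ℤ):ℝ)/m) * (if (m:ℤ) ∣ 2*a*h then (m:ℂ) else 0) := by
    intro h
    rw [Finset.sum_congr rfl fun n _ => hcross n h, ← Finset.mul_sum,
      geom_eR (2*a*h) m hm0]
  have habsT : ∀ h : ℕ, ‖(∑ n ∈ range m, F (n + h) * (starRingEnd ℂ) (F n))‖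
      = (if (m:ℤ) ∣ 2*a*(h:ℤ) then (m:ℝ) else 0) := by
    intro h
    rw [hT h, norm_mul, abs_eR, one_mul]
    split_ifs with hd
    · simp
    · simp
  -- |S|^2 = ∑_h T h
  have hsq : ((Complex.normSq S : ℝ) : ℂ) = ∑ h ∈ range m, ∑ n ∈ range m, F (n + h) * (starRingEnd ℂ) (F n) := by
    rw [← Complex.mul_conj S]
    calc S * (starRingEnd ℂ) S = ∑ n ∈ range m, S * (starRingEnd ℂ) (F n) := by
          rw [hSdef, map_sum, Finset.mul_sum]
      _ = ∑ n ∈ range m, (∑ h ∈ range m, F (n + h)) * (starRingEnd ℂ) (F n) := by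
          refine Finset.sum_congr rfl fun n _ => ?_
          congr 1
          rw [hSdef]
          rw [← shift_sum m n F hF]
          exact Finset.sum_congr rfl fun h _ => by rw [Nat.add_comm h n]
      _ = ∑ n ∈ range m, ∑ h ∈ range m, F (n + h) * (starRingEnd ℂ) (F n) := by
          refine Finset.sum_congr rfl fun n _ => ?_
          rw [Finset.sum_mul]
      _ = ∑ h ∈ range m, ∑ n ∈ range m, F (n + h) * (starRingEnd ℂ) (F n) := Finset.sum_comm
  -- bound normSq S
  have hbound : Complex.normSq S ≤ (m : ℝ) * (Int.gcd (2*a) m : ℕ) := by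
    have h1 : Complex.normSq S = ‖(((Complex.normSq S : ℝ) : ℂ))‖ := by
      rw [Complex.norm_real, Real.norm_eq_abs, _root_.abs_of_nonneg (Complex.normSq_nonneg S)]
    rw [h1, hsq]
    calc ‖(∑ h ∈ range m, ∑ n ∈ range m, F (n + h) * (starRingEnd ℂ) (F n))‖
        ≤ ∑ h ∈ range m, ‖(∑ n ∈ range m, F (n + h) * (starRingEnd ℂ) (F n))‖ :=
          norm_sum_le _ _
      _ = ∑ h ∈ range m, (if (m:ℤ) ∣ 2*a*(h:ℤ) then (m:ℝ) else 0) :=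
          Finset.sum_congr rfl fun h _ => habsT h
      _ = ∑ h ∈ (range m).filter (fun h : ℕ => (m:ℤ) ∣ 2 * a * (h:ℤ)), (m:ℝ) :=
          (Finset.sum_filter _ _).symm
      _ = ((range m).filter (fun h : ℕ => (m:ℤ) ∣ 2 * a * (h:ℤ))).card * (m:ℝ) := by
          rw [Finset.sum_const, nsmul_eq_mul]
      _ = (m : ℝ) * (Int.gcd (2*a) m : ℕ) := by
          rw [count_sol a m hm0]; ring
  -- finish
  have hrhs : (0:ℝ) ≤ 2 * m * Int.gcd a m := by positivity
  rw [Real.le_sqrt (norm_nonneg _) hrhs]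
  rw [Complex.sq_norm]
  calc Complex.normSq S ≤ (m : ℝ) * (Int.gcd (2*a) m : ℕ) := hbound
    _ ≤ (m : ℝ) * (2 * Int.gcd a m : ℕ) := by
        have := gcd_two_le a m hm0
        have h2 : ((Int.gcd (2*a) m : ℕ) : ℝ) ≤ ((2 * Int.gcd a m : ℕ) : ℝ) := by exact_mod_cast this
        exact mul_le_mul_of_nonneg_left h2 (by positivity)
    _ = 2 * m * Int.gcd a m := by push_cast; ring
end

section
/- Let N ≥ 1, N' ≥ 1, R ≥ 1 be integers and z₁,...,z_N complex numbers. Then |Σ_{n=1}^N z_n|² ≤ ((N + N'R - N')/R) · Re( Σ_{n=1}^N |z_n|² + 2 Σ_{r=1}^{R-1} (1 - r/R) Σ_{n=1}^{N-N'r} z_{n+N'r}·conj(z_n) ), where an inner sum Σ_{n=1}^{N-N'r} is empty (equal to 0) when N'r ≥ N. -/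
open Finset Complex

namespace VdCAux

noncomputable def w (N : ℕ) (z : ℕ → ℂ) : ℤ → ℂ :=
  fun k => if 1 ≤ k ∧ k ≤ (N : ℤ) then z k.toNat else 0

variable (N : ℕ) (z : ℕ → ℂ)

lemma w_zero {k : ℤ} (h : k < 1 ∨ (N : ℤ) < k) : w N z k = 0 := by
  unfold w; rw [if_neg]; omega

lemma w_cast {n : ℕ} (h1 : 1 ≤ n) (h2 : n ≤ N) : w N z (n : ℤ) = z n := by
  unfold w
  rw [if_pos (by omega)]
  simp

lemma sum_int_nat (f : ℤ → ℂ) (b : ℕ) :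
    ∑ k ∈ Finset.Icc (1 : ℤ) (b : ℤ), f k = ∑ n ∈ Finset.Icc 1 b, f (n : ℤ) := by
  refine Finset.sum_nbij' Int.toNat (Nat.cast) ?_ ?_ ?_ ?_ ?_ <;>
    simp only [Finset.mem_Icc] <;> intros <;> first
      | omega
      | (congr 1; omega)

lemma sum_w_subset {J : Finset ℤ} (hJ : Finset.Icc (1:ℤ) (N:ℤ) ⊆ J) :
    ∑ k ∈ J, w N z k = ∑ k ∈ Finset.Icc (1:ℤ) (N:ℤ), w N z k :=
  (Finset.sum_subset hJ (fun x _ hx => w_zero N z (by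
    simp only [Finset.mem_Icc] at hx; omega))).symm

lemma sum_wprod_subset (c : ℤ) {J : Finset ℤ} (hJ : Finset.Icc (1:ℤ) ((N:ℤ) - c) ⊆ J) :
    ∑ m ∈ J, w N z (m + c) * (starRingEnd ℂ) (w N z m)
      = ∑ m ∈ Finset.Icc (1:ℤ) ((N:ℤ) - c), w N z (m + c) * (starRingEnd ℂ) (w N z m) := by
  refine (Finset.sum_subset hJ (fun x _ hx => ?_)).symm
  simp only [Finset.mem_Icc] at hx
  rcases lt_or_ge x 1 with h | h
  · rw [w_zero N z (Or.inl h)]; simp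
  · rw [w_zero N z (Or.inr (by omega))]; simp

/-- lower-triangle reindexing -/
lemma triangle_reindex {M : Type*} [AddCommMonoid M] (R : ℕ) (H : ℕ → ℕ → M) :
    ∑ r ∈ Finset.range R, ∑ j ∈ Finset.range r, H r j
      = ∑ d ∈ Finset.Icc 1 (R-1), ∑ j ∈ Finset.range (R - d), H (j + d) j := by
  rw [Finset.sum_sigma', Finset.sum_sigma']
  refine Finset.sum_nbij' (fun p => ⟨p.1 - p.2, p.2⟩) (fun p => ⟨p.2 + p.1, p.2⟩) ?_ ?_ ?_ ?_ ?_
  · rintro ⟨x, y⟩ h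
    simp only [Finset.mem_sigma, Finset.mem_range, Finset.mem_Icc] at h ⊢
    omega
  · rintro ⟨x, y⟩ h
    simp only [Finset.mem_sigma, Finset.mem_range, Finset.mem_Icc] at h ⊢
    omega
  · rintro ⟨x, y⟩ h
    simp only [Finset.mem_sigma, Finset.mem_range] at h
    simp only [show y + (x - y) = x from by omega]
  · rintro ⟨x, y⟩ h
    simp only [Finset.mem_sigma, Finset.mem_range, Finset.mem_Icc] at h
    simp only [show y + x - y = x from by omega]
  · rintro ⟨x, y⟩ h
    simp only [Finset.mem_sigma, Finset.mem_range] at h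
    simp only [show y + (x - y) = x from by omega]

lemma pair_decomp {M : Type*} [AddCommMonoid M] (R : ℕ) (G : ℕ → ℕ → M) :
    ∑ r ∈ Finset.range R, ∑ j ∈ Finset.range R, G r j
      = ∑ r ∈ Finset.range R, G r r
        + ∑ r ∈ Finset.range R, ∑ j ∈ Finset.range r, (G r j + G j r) := by
  have h1 : ∀ r ∈ Finset.range R,
      ∑ j ∈ Finset.range R, G r j
        = G r r + (∑ j ∈ Finset.range r, G r j + ∑ j ∈ Finset.Ico (r+1) R, G r j) := by
    intro r hr
    simp only [Finset.mem_range] at hr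
    rw [Finset.range_eq_Ico, ← Finset.sum_Ico_consecutive _ (Nat.zero_le (r+1)) (by omega),
      ← Finset.range_eq_Ico, Finset.sum_range_succ]
    abel
  have h2 : ∑ r ∈ Finset.range R, ∑ j ∈ Finset.Ico (r+1) R, G r j
      = ∑ r ∈ Finset.range R, ∑ j ∈ Finset.range r, G j r := by
    simp only [Finset.range_eq_Ico]
    rw [Finset.sum_Ico_Ico_comm']
  rw [Finset.sum_congr rfl h1, Finset.sum_add_distrib, Finset.sum_add_distrib, h2]
  congr 1
  rw [← Finset.sum_add_distrib]
  exact Finset.sum_congr rfl fun r _ => (Finset.sum_add_distrib).symm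

end VdCAux

/-- a variant of van der Corput's inequality with shift step `N'`:
`|Σ_{n=1}^N z_n|² ≤ ((N + N'R - N')/R)·Re(Σ_{n=1}^N |z_n|²
  + 2 Σ_{r=1}^{R-1} (1 - r/R) Σ_{n=1}^{N-N'r} z_{n+N'r}·conj(z_n))`,
where the inner sum is empty when `N'r ≥ N` (ℕ-subtraction). -/
theorem van_der_corput_variant (N N' R : ℕ) (hN : 1 ≤ N) (hN' : 1 ≤ N') (hR : 1 ≤ R)
    (z : ℕ → ℂ) :
    ‖∑ n ∈ Finset.Icc 1 N, z n‖ ^ 2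
      ≤ (((N : ℝ) + N' * R - N') / R) *
          (((∑ n ∈ Finset.Icc 1 N, ‖z n‖ ^ 2 : ℝ) : ℂ)
            + 2 * ∑ r ∈ Finset.Icc 1 (R - 1),
                (((1 - (r : ℝ) / R : ℝ)) : ℂ) *
                  ∑ n ∈ Finset.Icc 1 (N - N' * r), z (n + N' * r) * (starRingEnd ℂ) (z n)).re := by
  have hR0 : (0:ℝ) < R := by positivity
  set c : ℤ := (N' : ℤ) with hc
  have hc0 : 0 ≤ c := Int.natCast_nonneg N'
  set I : Finset ℤ := Finset.Icc (1 - c * ((R:ℤ) - 1)) (N : ℤ) with hI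
  set W := VdCAux.w N z with hW
  set T : ℤ → ℂ := fun m => ∑ r ∈ Finset.range R, W (m + c * r) with hT
  set B : ℕ → ℂ := fun d => ∑ m ∈ Finset.Icc (1:ℤ) ((N:ℤ) - c * d),
      W (m + c * d) * (starRingEnd ℂ) (W m) with hB
  set S : ℂ := ∑ n ∈ Finset.Icc 1 N, z n with hS
  set G : ℕ → ℕ → ℂ := fun r j => ∑ m ∈ I, W (m + c * r) * (starRingEnd ℂ) (W (m + c * j))
    with hG
  -- sum of W over the basic window
  have hWsum : ∑ k ∈ Finset.Icc (1:ℤ) (N:ℤ), W k = S := by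
    rw [hW, VdCAux.sum_int_nat, hS]
    refine Finset.sum_congr rfl fun n hn => ?_
    rw [Finset.mem_Icc] at hn
    exact VdCAux.w_cast N z hn.1 hn.2
  -- step 1 : sum of T over I is R * S
  have hTsum : ∑ m ∈ I, T m = (R:ℂ) * S := by
    rw [hT]
    rw [Finset.sum_comm]
    have key : ∀ r ∈ Finset.range R, ∑ m ∈ I, W (m + c * r) = S := by
      intro r hr
      rw [Finset.mem_range] at hr
      have h1 : (0:ℤ) ≤ c * r := mul_nonneg hc0 (Int.natCast_nonneg r)
      have h2 : c * r ≤ c * ((R:ℤ) - 1) :=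
        mul_le_mul_of_nonneg_left (by omega) hc0
      have hmap : ∑ m ∈ I, W (m + c * r)
          = ∑ k ∈ I.map (addRightEmbedding (c * r)), W k := by
        rw [Finset.sum_map]; rfl
      rw [hmap, hI, Finset.map_add_right_Icc]
      rw [VdCAux.sum_w_subset N z (Finset.Icc_subset_Icc (by linarith) (by linarith))]
      exact hWsum
    rw [Finset.sum_congr rfl key, Finset.sum_const, Finset.card_range, nsmul_eq_mul]
  -- values of G
  have hGval : ∀ j d : ℕ, j + d < R → G (j + d) j = B d := by
    intro j d hjd
    have h1 : (0:ℤ) ≤ c * j := mul_nonneg hc0 (Int.natCast_nonneg j)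
    have h2 : c * j ≤ c * ((R:ℤ) - 1) := mul_le_mul_of_nonneg_left (by omega) hc0
    have h3 : (0:ℤ) ≤ c * d := mul_nonneg hc0 (Int.natCast_nonneg d)
    have hmap : G (j + d) j
        = ∑ k ∈ I.map (addRightEmbedding (c * j)),
            W (k + c * d) * (starRingEnd ℂ) (W k) := by
      rw [hG, Finset.sum_map]
      refine Finset.sum_congr rfl fun m _ => ?_
      have he : (addRightEmbedding (c * j)) m = m + c * j := rfl
      have harg : m + c * ((j + d : ℕ) : ℤ) = (m + c * j) + c * d := by push_cast; ring
      rw [he, harg]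
    rw [hmap, hI, Finset.map_add_right_Icc, hB]
    exact VdCAux.sum_wprod_subset N z (c * d)
      (Finset.Icc_subset_Icc (by linarith) (by linarith))
  have hGconj : ∀ a b : ℕ, (starRingEnd ℂ) (G a b) = G b a := by
    intro a b
    rw [hG, map_sum]
    refine Finset.sum_congr rfl fun m _ => ?_
    rw [map_mul, Complex.conj_conj]
    ring
  -- step 2 : expansion
  have hExpand : ∑ m ∈ I, T m * (starRingEnd ℂ) (T m)
      = (R:ℂ) * B 0
        + ∑ d ∈ Finset.Icc 1 (R - 1), ((R - d : ℕ) : ℂ) * (B d + (starRingEnd ℂ) (B d)) := by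
    have h0 : ∀ m ∈ I, T m * (starRingEnd ℂ) (T m)
        = ∑ r ∈ Finset.range R, ∑ j ∈ Finset.range R,
            W (m + c * r) * (starRingEnd ℂ) (W (m + c * j)) := by
      intro m _
      rw [hT, map_sum, Finset.sum_mul_sum]
    rw [Finset.sum_congr rfl h0]
    rw [Finset.sum_comm]
    have h1 : ∀ r ∈ Finset.range R,
        ∑ m ∈ I, ∑ j ∈ Finset.range R, W (m + c * r) * (starRingEnd ℂ) (W (m + c * j))
          = ∑ j ∈ Finset.range R, G r j := by
      intro r _
      rw [Finset.sum_comm]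
    rw [Finset.sum_congr rfl h1, VdCAux.pair_decomp]
    have hdiag : ∀ r ∈ Finset.range R, G r r = B 0 := by
      intro r hr
      rw [Finset.mem_range] at hr
      have := hGval r 0 (by omega)
      simpa using this
    have htri : ∑ r ∈ Finset.range R, ∑ j ∈ Finset.range r, (G r j + G j r)
        = ∑ d ∈ Finset.Icc 1 (R - 1), ((R - d : ℕ) : ℂ)
            * (B d + (starRingEnd ℂ) (B d)) := by
      rw [VdCAux.triangle_reindex]
      refine Finset.sum_congr rfl fun d hd => ?_
      rw [Finset.mem_Icc] at hd
      have hval : ∀ j ∈ Finset.range (R - d), G (j + d) j + G j (j + d)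
          = B d + (starRingEnd ℂ) (B d) := by
        intro j hj
        rw [Finset.mem_range] at hj
        have h := hGval j d (by omega)
        rw [h, ← hGconj (j + d) j, h]
      rw [Finset.sum_congr rfl hval, Finset.sum_const, Finset.card_range, nsmul_eq_mul]
    rw [Finset.sum_congr rfl hdiag, Finset.sum_const, Finset.card_range, nsmul_eq_mul, htri]
  -- Cauchy-Schwarz
  have hCS : ‖∑ m ∈ I, T m‖ ^ 2
      ≤ (I.card : ℝ) * ∑ m ∈ I, ‖T m‖ ^ 2 := by
    have h1 : ‖∑ m ∈ I, T m‖ ≤ ∑ m ∈ I, ‖T m‖ :=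
      norm_sum_le _ _
    have h2 := Finset.sum_mul_sq_le_sq_mul_sq I (fun _ => (1:ℝ)) (fun m => ‖T m‖)
    simp only [one_mul, one_pow, Finset.sum_const, nsmul_eq_mul, mul_one] at h2
    calc ‖∑ m ∈ I, T m‖ ^ 2
        ≤ (∑ m ∈ I, ‖T m‖) ^ 2 := by
          apply pow_le_pow_left₀ (norm_nonneg _) h1
      _ ≤ (I.card : ℝ) * ∑ m ∈ I, ‖T m‖ ^ 2 := h2
  have habs : ∑ m ∈ I, ‖T m‖ ^ 2 = (∑ m ∈ I, T m * (starRingEnd ℂ) (T m)).re := by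
    rw [Complex.re_sum]
    refine Finset.sum_congr rfl fun m _ => ?_
    rw [Complex.mul_conj, Complex.ofReal_re, ← Complex.sq_norm]
  -- cardinality of I
  have hcard : (I.card : ℝ) = (N:ℝ) + N' * R - N' := by
    rw [hI, Int.card_Icc]
    have h1 : ((N:ℤ) + 1 - (1 - c * ((R:ℤ) - 1))) = (N:ℤ) + c * ((R:ℤ) - 1) := by ring
    have h2 : (0:ℤ) ≤ (N:ℤ) + c * ((R:ℤ) - 1) := by
      have := mul_nonneg hc0 (by omega : (0:ℤ) ≤ (R:ℤ) - 1)
      omega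
    rw [h1]
    have h3 : (((((N:ℤ) + c * ((R:ℤ) - 1)).toNat : ℕ)) : ℝ)
        = (((N:ℤ) + c * ((R:ℤ) - 1) : ℤ) : ℝ) := by
      rw [← Int.cast_natCast, Int.toNat_of_nonneg h2]
    rw [h3]
    simp only [hc]
    push_cast
    ring
  -- identify B d with the ℕ-indexed sums
  have hB0c : B 0 = ((∑ n ∈ Finset.Icc 1 N, ‖z n‖ ^ 2 : ℝ) : ℂ) := by
    rw [hB]
    simp only [Nat.cast_zero, mul_zero, sub_zero, add_zero]
    rw [hW, VdCAux.sum_int_nat, Complex.ofReal_sum]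
    refine Finset.sum_congr rfl fun n hn => ?_
    rw [Finset.mem_Icc] at hn
    rw [VdCAux.w_cast N z hn.1 hn.2, Complex.mul_conj, Complex.sq_norm]
  have hBeq : ∀ d ∈ Finset.Icc 1 (R - 1),
      ∑ n ∈ Finset.Icc 1 (N - N' * d), z (n + N' * d) * (starRingEnd ℂ) (z n) = B d := by
    intro d _
    have hBd : B d = ∑ m ∈ Finset.Icc (1:ℤ) ((N:ℤ) - c * d),
        W (m + c * d) * (starRingEnd ℂ) (W m) := rfl
    by_cases hdN : N' * d ≤ N
    · rw [hBd]
      have hcast : (N:ℤ) - c * d = ((N - N' * d : ℕ) : ℤ) := by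
        rw [Nat.cast_sub hdN]; push_cast; ring
      rw [hcast, hW, VdCAux.sum_int_nat]
      refine (Finset.sum_congr rfl fun n hn => ?_).symm
      rw [Finset.mem_Icc] at hn
      have harg : (n:ℤ) + c * d = ((n + N' * d : ℕ) : ℤ) := by push_cast; ring
      rw [harg, VdCAux.w_cast N z (by omega) (by omega),
        VdCAux.w_cast N z (by omega) (by omega)]
    · have hlt : (N:ℤ) < c * d := by
        have : ((N' * d : ℕ) : ℤ) = c * d := by push_cast; ring
        omega
      have h1 : Finset.Icc (1:ℤ) ((N:ℤ) - c * d) = ∅ :=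
        Finset.Icc_eq_empty (not_le.mpr (by linarith))
      have h2 : N - N' * d = 0 := by omega
      rw [hBd, h1, h2]
      simp
  -- real parts
  have hre : (∑ m ∈ I, T m * (starRingEnd ℂ) (T m)).re
      = (R:ℝ) * (B 0).re
        + ∑ d ∈ Finset.Icc 1 (R - 1), ((R - d : ℕ) : ℝ) * (2 * (B d).re) := by
    rw [hExpand]
    simp only [Complex.add_re, Complex.mul_re, Complex.natCast_re, Complex.natCast_im,
      Complex.re_sum, Complex.conj_re, zero_mul, sub_zero, mul_zero]
    congr 1
    exact Finset.sum_congr rfl fun x _ => by ring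
  -- real part of the RHS expression
  have hrhs : (((∑ n ∈ Finset.Icc 1 N, ‖z n‖ ^ 2 : ℝ) : ℂ)
            + 2 * ∑ r ∈ Finset.Icc 1 (R - 1),
                (((1 - (r : ℝ) / R : ℝ)) : ℂ) *
                  ∑ n ∈ Finset.Icc 1 (N - N' * r), z (n + N' * r) * (starRingEnd ℂ) (z n)).re
      = (B 0).re + 2 * ∑ d ∈ Finset.Icc 1 (R - 1), (1 - (d:ℝ)/R) * (B d).re := by
    have h1 : ∑ r ∈ Finset.Icc 1 (R - 1),
        (((1 - (r : ℝ) / R : ℝ)) : ℂ) *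
          ∑ n ∈ Finset.Icc 1 (N - N' * r), z (n + N' * r) * (starRingEnd ℂ) (z n)
        = ∑ r ∈ Finset.Icc 1 (R - 1), (((1 - (r : ℝ) / R : ℝ)) : ℂ) * B r :=
      Finset.sum_congr rfl fun d hd => by rw [hBeq d hd]
    rw [h1, ← hB0c]
    simp only [Complex.add_re, Complex.mul_re, Complex.ofReal_re, Complex.ofReal_im,
      Complex.re_sum, zero_mul, sub_zero, mul_zero]
    norm_num
  -- final assembly
  have hLHS : ‖(R:ℂ) * S‖ = (R:ℝ) * ‖S‖ := by
    rw [norm_mul, Complex.norm_natCast]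
  have hkey : ((R:ℝ) * ‖S‖) ^ 2
      ≤ ((N:ℝ) + N' * R - N') * ((R:ℝ) * (B 0).re
          + ∑ d ∈ Finset.Icc 1 (R - 1), ((R - d : ℕ) : ℝ) * (2 * (B d).re)) := by
    rw [← hLHS, ← hTsum]
    calc ‖∑ m ∈ I, T m‖ ^ 2
        ≤ (I.card : ℝ) * ∑ m ∈ I, ‖T m‖ ^ 2 := hCS
      _ = ((N:ℝ) + N' * R - N') * ((R:ℝ) * (B 0).re
          + ∑ d ∈ Finset.Icc 1 (R - 1), ((R - d : ℕ) : ℝ) * (2 * (B d).re)) := by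
          rw [hcard, habs, hre]
  rw [hrhs]
  have hsum : ∑ d ∈ Finset.Icc 1 (R - 1), ((R - d : ℕ) : ℝ) * (2 * (B d).re)
      = (R:ℝ) * (2 * ∑ d ∈ Finset.Icc 1 (R - 1), (1 - (d:ℝ)/R) * (B d).re) := by
    rw [Finset.mul_sum, Finset.mul_sum]
    refine Finset.sum_congr rfl fun d hd => ?_
    rw [Finset.mem_Icc] at hd
    have hdR : d ≤ R := by omega
    rw [Nat.cast_sub hdR]
    field_simp
  rw [hsum] at hkey
  rw [div_mul_eq_mul_div, le_div_iff₀ hR0]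
  nlinarith [hkey, sq_nonneg (‖S‖)]
end
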